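/- (Witt's formula for q-Euler numbers) Let p be an odd prime and q ∈ ℚ_p with |1 − q|_p < 1. For every n ≥ 0, the limit lim_{N→∞} (1/[p^N]_{−q})·Σ_{x=0}^{p^N−1} x^n (−q)^x exists in ℚ_p and equals the q-Euler number E_{n,q}. -/

import Mathlib

open Filter Finset

private lemma aux_norm_sub {p : ℕ} [Fact (Nat.Prime p)] (a b : ℚ_[p])
    (h : ‖b‖ < ‖a‖) : ‖a - b‖ = ‖a‖ := by
  have h1 : ‖a - b‖ ≤ ‖a‖ := by
    have h2 := Padic.nonarchimedean a (-b)
    rw [norm_neg] at h2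
    have h3 : a + -b = a - b := by ring
    rw [h3] at h2
    exact h2.trans (max_le le_rfl h.le)
  refine le_antisymm h1 ?_
  by_contra hc
  push_neg at hc
  have h4 : ‖a‖ ≤ max ‖a - b‖ ‖b‖ := by
    have := Padic.nonarchimedean (a - b) b
    simpa using this
  rcases max_cases ‖a - b‖ ‖b‖ with ⟨he, _⟩ | ⟨he, _⟩ <;> rw [he] at h4 <;> linarith

private lemma key_id {p : ℕ} [Fact (Nat.Prime p)] (q : ℚ_[p]) (n : ℕ) (hn : 1 ≤ n)
    (M : ℕ) :
    q * ∑ k ∈ range (n + 1), (n.choose k : ℚ_[p]) *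
        (∑ x ∈ range M, (x : ℚ_[p]) ^ k * (-q) ^ x) +
      ∑ x ∈ range M, (x : ℚ_[p]) ^ n * (-q) ^ x
    = -((M : ℚ_[p]) ^ n * (-q) ^ M) := by
  have hb : ∀ x : ℚ_[p], (x + 1) ^ n
      = ∑ k ∈ range (n + 1), (n.choose k : ℚ_[p]) * x ^ k := by
    intro x
    rw [add_pow]
    refine Finset.sum_congr rfl fun k _ => by ring
  have hswap : ∑ k ∈ range (n + 1), (n.choose k : ℚ_[p]) *
        (∑ x ∈ range M, (x : ℚ_[p]) ^ k * (-q) ^ x)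
      = ∑ x ∈ range M, ((x : ℚ_[p]) + 1) ^ n * (-q) ^ x := by
    calc ∑ k ∈ range (n + 1), (n.choose k : ℚ_[p]) *
          (∑ x ∈ range M, (x : ℚ_[p]) ^ k * (-q) ^ x)
        = ∑ k ∈ range (n + 1), ∑ x ∈ range M,
            ((n.choose k : ℚ_[p]) * (x : ℚ_[p]) ^ k) * (-q) ^ x := by
          simp [Finset.mul_sum, mul_assoc]
      _ = ∑ x ∈ range M, ∑ k ∈ range (n + 1),
            ((n.choose k : ℚ_[p]) * (x : ℚ_[p]) ^ k) * (-q) ^ x := Finset.sum_comm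
      _ = ∑ x ∈ range M, ((x : ℚ_[p]) + 1) ^ n * (-q) ^ x := by
          refine Finset.sum_congr rfl fun x _ => ?_
          rw [← Finset.sum_mul, ← hb]
  have hshift : ∑ x ∈ range M, ((x : ℚ_[p]) + 1) ^ n * (-q) ^ (x + 1)
      = (∑ x ∈ range M, (x : ℚ_[p]) ^ n * (-q) ^ x) + (M : ℚ_[p]) ^ n * (-q) ^ M := by
    have h0 : ((0 : ℕ) : ℚ_[p]) ^ n * (-q) ^ 0 = 0 := by
      simp [zero_pow (by omega : n ≠ 0)]
    have hs := Finset.sum_range_succ' (fun x : ℕ => (x : ℚ_[p]) ^ n * (-q) ^ x) M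
    rw [Finset.sum_range_succ] at hs
    have hcast : ∀ x : ℕ, (((x + 1 : ℕ) : ℚ_[p])) ^ n * (-q) ^ (x + 1)
        = ((x : ℚ_[p]) + 1) ^ n * (-q) ^ (x + 1) := by
      intro x; push_cast; ring
    simp only [hcast, h0, add_zero] at hs
    exact hs.symm
  have hU : ∑ x ∈ range M, ((x : ℚ_[p]) + 1) ^ n * (-q) ^ (x + 1)
      = -q * ∑ x ∈ range M, ((x : ℚ_[p]) + 1) ^ n * (-q) ^ x := by
    rw [Finset.mul_sum]
    refine Finset.sum_congr rfl fun x _ => ?_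
    rw [pow_succ]
    ring
  linear_combination q * hswap + hU - hshift

private lemma witt_aux (p : ℕ) [Fact (Nat.Prime p)] (hp : Odd p)
    (q : ℚ_[p]) (hq : ‖1 - q‖ < 1)
    (E : ℕ → ℚ_[p]) (hE0 : E 0 = 1)
    (hE : ∀ m : ℕ, 1 ≤ m →
      q * ∑ k ∈ range (m + 1), (m.choose k : ℚ_[p]) * E k + E m = 0)
    (n : ℕ) :
    Tendsto (fun N : ℕ =>
        ((1 + q) / (1 - (-q) ^ (p ^ N))) * ∑ x ∈ range (p ^ N), (x : ℚ_[p]) ^ n * (-q) ^ x)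
      atTop (nhds (E n)) := by
  have hpp : Nat.Prime p := Fact.out
  have hp1 : 1 < p := hpp.one_lt
  -- basic norm facts
  have hq1 : ‖q‖ = 1 := by
    have := aux_norm_sub (1 : ℚ_[p]) (1 - q) (by rwa [norm_one])
    simpa using this
  have h2 : ‖(2 : ℚ_[p])‖ = 1 := by
    have hle : ‖((2 : ℤ) : ℚ_[p])‖ ≤ 1 := Padic.norm_int_le_one 2
    have hnd : ¬ ((p : ℤ) ∣ 2) := by
      intro hdvd
      have hle2 : (p : ℤ) ≤ 2 := Int.le_of_dvd (by norm_num) hdvd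
      obtain ⟨k, hk⟩ := hp
      omega
    have hlt := (Padic.norm_intCast_lt_one_iff (k := (2 : ℤ))).not.mpr hnd
    push_neg at hlt
    have : ((2 : ℤ) : ℚ_[p]) = (2 : ℚ_[p]) := by norm_cast
    rw [this] at hle hlt
    linarith
  have hqm : ∀ m : ℕ, ‖1 - q ^ m‖ < 1 := by
    intro m
    induction m with
    | zero => simp
    | succ m ihm =>
      have hsplit : 1 - q ^ (m + 1) = (1 - q ^ m) + q ^ m * (1 - q) := by ring
      rw [hsplit]
      calc ‖(1 - q ^ m) + q ^ m * (1 - q)‖ ≤ max ‖1 - q ^ m‖ ‖q ^ m * (1 - q)‖ :=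
            Padic.nonarchimedean _ _
        _ < 1 := by
            rw [max_lt_iff]
            constructor
            · exact ihm
            · rw [norm_mul, norm_pow, hq1, one_pow, one_mul]; exact hq
  have hoddM : ∀ N : ℕ, Odd (p ^ N) := fun N => hp.pow
  have hden : ∀ N : ℕ, ‖1 - (-q) ^ (p ^ N)‖ = 1 := by
    intro N
    rw [(hoddM N).neg_pow]
    have hsplit : 1 - -(q ^ (p ^ N)) = 2 - (1 - q ^ (p ^ N)) := by ring
    rw [hsplit, aux_norm_sub _ _ (by rw [h2]; exact hqm _), h2]
  have hnum : ‖1 + q‖ = 1 := by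
    have hsplit : 1 + q = 2 - (1 - q) := by ring
    rw [hsplit, aux_norm_sub _ _ (by rw [h2]; exact hq), h2]
  have hnum0 : 1 + q ≠ 0 := by
    intro h; rw [h, norm_zero] at hnum; norm_num at hnum
  have hden0 : ∀ N : ℕ, 1 - (-q) ^ (p ^ N) ≠ 0 := by
    intro N h; have := hden N; rw [h, norm_zero] at this; norm_num at this
  have hcnorm : ∀ N : ℕ, ‖(1 + q) / (1 - (-q) ^ (p ^ N))‖ = 1 := by
    intro N; rw [norm_div, hnum, hden N, div_one]
  -- strong induction
  induction n using Nat.strong_induction_on with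
  | _ n ih =>
  rcases Nat.eq_zero_or_pos n with h0 | hpos
  · -- base case
    subst h0
    have hfun : (fun N : ℕ =>
        ((1 + q) / (1 - (-q) ^ (p ^ N))) * ∑ x ∈ range (p ^ N), (x : ℚ_[p]) ^ 0 * (-q) ^ x)
        = fun _ : ℕ => (1 : ℚ_[p]) := by
      funext N
      have hgeom : ∑ x ∈ range (p ^ N), (-q) ^ x = ((-q) ^ (p ^ N) - 1) / (-q - 1) := by
        refine geom_sum_eq ?_ _
        intro h
        exact hnum0 (by linear_combination -h)
      simp only [pow_zero, one_mul, hgeom]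
      rw [div_mul_div_comm]
      rw [div_eq_one_iff_eq (by
        intro h
        have h2' : -q - 1 = -(1 + q) := by ring
        rw [h2'] at h
        rcases mul_eq_zero.mp h with h' | h'
        · exact hden0 N h'
        · exact hnum0 (by linear_combination -h'))]
      ring
    rw [hfun, hE0]
    exact tendsto_const_nhds
  · -- inductive step, n ≥ 1
    have hq1' : q + 1 ≠ 0 := fun h => hnum0 (by linear_combination h)
    have hkey : ∀ N : ℕ,
        (q + 1) * (((1 + q) / (1 - (-q) ^ (p ^ N))) *
            ∑ x ∈ range (p ^ N), (x : ℚ_[p]) ^ n * (-q) ^ x)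
        = -(((1 + q) / (1 - (-q) ^ (p ^ N))) * ((p : ℚ_[p]) ^ N) ^ n * (-q) ^ (p ^ N))
          - q * ∑ k ∈ range n, (n.choose k : ℚ_[p]) *
              (((1 + q) / (1 - (-q) ^ (p ^ N))) *
                ∑ x ∈ range (p ^ N), (x : ℚ_[p]) ^ k * (-q) ^ x) := by
      intro N
      have hid := key_id q n hpos (p ^ N)
      rw [Finset.sum_range_succ] at hid
      simp only [Nat.choose_self, Nat.cast_one, one_mul] at hid
      push_cast at hid
      have hms : ∑ k ∈ range n, (n.choose k : ℚ_[p]) *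
              (((1 + q) / (1 - (-q) ^ (p ^ N))) *
                ∑ x ∈ range (p ^ N), (x : ℚ_[p]) ^ k * (-q) ^ x)
          = ((1 + q) / (1 - (-q) ^ (p ^ N))) * ∑ k ∈ range n, (n.choose k : ℚ_[p]) *
                ∑ x ∈ range (p ^ N), (x : ℚ_[p]) ^ k * (-q) ^ x := by
        rw [Finset.mul_sum]
        exact Finset.sum_congr rfl fun k _ => by ring
      rw [hms]
      linear_combination ((1 + q) / (1 - (-q) ^ (p ^ N))) * hid
    have herr : Tendsto (fun N : ℕ =>
        -(((1 + q) / (1 - (-q) ^ (p ^ N))) * ((p : ℚ_[p]) ^ N) ^ n * (-q) ^ (p ^ N)))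
        atTop (nhds 0) := by
      refine squeeze_zero_norm (a := fun N : ℕ => ((p : ℝ)⁻¹) ^ N) ?_ ?_
      · intro N
        rw [norm_neg, norm_mul, norm_mul, hcnorm, norm_pow, norm_pow, Padic.norm_p,
          norm_pow, norm_neg, hq1, one_pow, mul_one, one_mul, ← pow_mul]
        exact pow_le_pow_of_le_one (by positivity) (by
          rw [inv_le_one_iff₀]; right; exact_mod_cast hp1.le)
          (Nat.le_mul_of_pos_right N hpos)
      · exact tendsto_pow_atTop_nhds_zero_of_lt_one (by positivity)
          (by rw [inv_lt_one_iff₀]; right; exact_mod_cast hp1)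
    have hsum : Tendsto (fun N : ℕ => ∑ k ∈ range n, (n.choose k : ℚ_[p]) *
            (((1 + q) / (1 - (-q) ^ (p ^ N))) *
              ∑ x ∈ range (p ^ N), (x : ℚ_[p]) ^ k * (-q) ^ x))
        atTop (nhds (∑ k ∈ range n, (n.choose k : ℚ_[p]) * E k)) := by
      refine tendsto_finset_sum _ fun k hk => ?_
      exact (ih k (Finset.mem_range.mp hk)).const_mul _
    have hRHS := herr.sub ((hsum.const_mul q))
    rw [zero_sub] at hRHS
    have hA1 := hRHS.congr fun N => (hkey N).symm
    have hA2 := hA1.const_mul ((q + 1)⁻¹)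
    have hA3 := hA2.congr fun N => by
      rw [← mul_assoc, inv_mul_cancel₀ hq1', one_mul]
    have hlim : (q + 1)⁻¹ * -(q * ∑ k ∈ range n, (n.choose k : ℚ_[p]) * E k) = E n := by
      have hEe := hE n hpos
      rw [Finset.sum_range_succ, Nat.choose_self, Nat.cast_one, one_mul] at hEe
      have hEn : (q + 1) * E n = -(q * ∑ k ∈ range n, (n.choose k : ℚ_[p]) * E k) := by
        linear_combination hEe
      rw [← hEn, ← mul_assoc, inv_mul_cancel₀ hq1', one_mul]
    rwa [hlim] at hA3

/-- Witt's formula for the `q`-Euler numbers: for an odd prime `p` and `q ∈ ℚ_p` with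
`|1-q|_p < 1`, if `E : ℕ → ℚ_p` are the `q`-Euler numbers (`E 0 = 1` and
`q ∑_{k=0}^n C(n,k) E k + E n = 0` for `n ≥ 1`), then for every `n ≥ 0`,
`lim_N (1/[p^N]₋q) ∑_{x=0}^{p^N-1} x^n (-q)^x = E n`. -/
theorem witt_formula_q_euler_numbers (p : ℕ) [Fact (Nat.Prime p)] (hp : Odd p)
    (q : ℚ_[p]) (hq : ‖1 - q‖ < 1)
    (E : ℕ → ℚ_[p]) (hE0 : E 0 = 1)
    (hE : ∀ m : ℕ, 1 ≤ m →
      q * ∑ k ∈ range (m + 1), (m.choose k : ℚ_[p]) * E k + E m = 0)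
    (n : ℕ) :
    Tendsto (fun N : ℕ =>
        ((1 + q) / (1 - (-q) ^ (p ^ N))) * ∑ x ∈ range (p ^ N), (x : ℚ_[p]) ^ n * (-q) ^ x)
      atTop (nhds (E n)) :=
  witt_aux p hp q hq E hE0 hE n
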